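/- Let λ = (λ_0, λ_1, …, λ_n): F → Π_{i=0}^n R^{i+1}(F) be an A-linear map. For integers p > 0 and 0 ≤ q ≤ n, define s_q(λ) := Σ_{i_1+⋯+i_p = q} (i_p+1)(λ_{i_1}⋯λ_{i_p}): R^p(F) → R^{p+q}(F) and s̃_q(λ) := Σ_{i_1+⋯+i_p=q} (λ_{i_1}⋯λ_{i_p}): S^p(F) → S^{p+q}(F). Then for every element ω of K^p(F) := σ*(R^p(F)), the images in S^{p+q}(F) satisfy s_q(λ)(ω) = ((p+q)/p)·s̃_q(λ)(ω). -/

import Mathlib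

open scoped TensorProduct

noncomputable section

variable (A : Type) [CommRing A]
variable (F : Type) [AddCommGroup F] [Module A F]

/-- `n`-fold tensor power `T^n(F)`. -/
abbrev TPow (n : ℕ) := PiTensorProduct A (fun _ : Fin n => F)

/-- The submodule of symmetry relations. -/
def symRel (n : ℕ) : Submodule A (TPow A F n) :=
  Submodule.span A
    {x | ∃ (m : Fin n → F) (e : Equiv.Perm (Fin n)),
      x = PiTensorProduct.tprod A m - PiTensorProduct.tprod A (m ∘ e)}

/-- Symmetric power `S^n(F)`. -/
abbrev SymPow (n : ℕ) := TPow A F n ⧸ symRel A F n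

/-- Class of the word `m₀ ⋯ m_{n-1}` in `S^n(F)`. -/
def mkS {n : ℕ} (m : Fin n → F) : SymPow A F n :=
  Submodule.Quotient.mk (PiTensorProduct.tprod A m)

/-- Class of a list of elements of `F` in the symmetric power. -/
def mkSL (l : List F) : SymPow A F l.length := mkS A F l.get

/-- `RPow A F n` is `R^{n+1}(F) = S^n(F) ⊗_A F`. -/
abbrev RPow (n : ℕ) := SymPow A F n ⊗[A] F

/-- Class of the word `m₀ ⋯ m_n` in `R^{n+1}(F) = S^n(F) ⊗ F`. -/
def mkR {n : ℕ} (m : Fin (n + 1) → F) : RPow A F n :=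
  mkS A F (fun i : Fin n => m i.castSucc) ⊗ₜ[A] m (Fin.last n)

/-- The `i`-th "rotation" of the word `m` appearing in the definition of the
switch operator: `m_n m_{n-1} ⋯ m_{n-i+1} m_0 m_1 ⋯ m_{n-i}` (0-indexed). -/
def rot {n : ℕ} (m : Fin (n + 1) → F) (i : ℕ) : Fin (n + 1) → F := fun j =>
  if j.val < i then m ⟨n - j.val, by have := j.isLt; omega⟩
  else m ⟨j.val - i, by have := j.isLt; omega⟩

/-- `σ` is the switch operator on `R^{n+1}(F)`:
`σ(m_0⋯m_n) = ∑_{i=1}^{n} m_n m_{n-1}⋯m_{n-i+1} m_0 m_1 ⋯ m_{n-i}`. -/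
def IsSwitch (n : ℕ) (σ : RPow A F n →ₗ[A] RPow A F n) : Prop :=
  ∀ m : Fin (n + 1) → F,
    σ (mkR A F m) = ∑ i ∈ Finset.Icc 1 n, mkR A F (rot F m i)

/-- `K^{n+1}(F) = σ*(R^{n+1}(F))`, described by its generators `σ*(m_0⋯m_n)`. -/
def KSub (n : ℕ) : Submodule A (RPow A F n) :=
  Submodule.span A
    {x | ∃ m : Fin (n + 1) → F,
      x = mkR A F m + ∑ i ∈ Finset.Icc 1 n, mkR A F (rot F m i)}

/-- `K²(F) ⊆ T²(F) = F ⊗ F`: the kernel of `T²(F) → Λ²(F)`, i.e. the image of `1 + σ`. -/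
def K2Sub : Submodule A (F ⊗[A] F) :=
  Submodule.span A {x | ∃ u v : F, x = u ⊗ₜ[A] v + v ⊗ₜ[A] u}

/-- The word `m₀ ⋯ m_{p-1} u m'₀ ⋯ m'_{q-1}`. -/
def joinWord {p q : ℕ} (m : Fin p → F) (u : F) (m' : Fin q → F) :
    Fin (p + q + 1) → F := fun j =>
  if h : j.val < p then m ⟨j.val, h⟩
  else if _h2 : j.val < p + 1 then u
  else m' ⟨j.val - (p + 1), by have := j.isLt; omega⟩

/-- The concatenated word `m₀ ⋯ m_{p-1} m'₀ ⋯ m'_{q-1}`. -/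
def appendWord {p q : ℕ} (m : Fin p → F) (m' : Fin q → F) : Fin (p + q) → F := fun j =>
  if h : j.val < p then m ⟨j.val, h⟩
  else m' ⟨j.val - p, by have := j.isLt; omega⟩

/-- `mul` is the multiplication `R^{p+1}(F) × R^{q+1}(F) → R^{p+q+2}(F)` of the graded
algebra `R(F)`, recorded with values in `∏ₖ R^{k+1}(F)`:
`(s ⊗ u)·(s' ⊗ v) = (s u s') ⊗ v`. -/
def IsMulR (mul : ∀ p q, RPow A F p →ₗ[A] RPow A F q →ₗ[A] ∀ k, RPow A F k) : Prop :=
  ∀ (p q : ℕ) (m : Fin p → F) (u : F) (m' : Fin q → F) (v : F),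
    mul p q (mkS A F m ⊗ₜ[A] u) (mkS A F m' ⊗ₜ[A] v)
      = Pi.single (p + q + 1) (mkS A F (joinWord F m u m') ⊗ₜ[A] v)

/-- `mul` is the multiplication `S^p(F) × S^q(F) → S^{p+q}(F)` of the symmetric algebra,
recorded with values in `∏ₖ S^k(F)`. -/
def IsMulS (mul : ∀ p q, SymPow A F p →ₗ[A] SymPow A F q →ₗ[A] ∀ k, SymPow A F k) : Prop :=
  ∀ (p q : ℕ) (m : Fin p → F) (m' : Fin q → F),
    mul p q (mkS A F m) (mkS A F m') = Pi.single (p + q) (mkS A F (appendWord F m m'))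

/-- `π` is the family of natural maps `R^{n+1}(F) = S^n(F) ⊗ F → S^{n+1}(F)`. -/
def IsPi (π : ∀ n, RPow A F n →ₗ[A] SymPow A F (n + 1)) : Prop :=
  ∀ (n : ℕ) (m : Fin n → F) (v : F),
    π n (mkS A F m ⊗ₜ[A] v) = mkS A F (Fin.snoc m v)

/-- `T = (T₀, T₁, …)` is a (full) extended `D`-connection:  `T₀ = id_F` (under
`F ≅ R¹(F)`), and `T_i(am) = a T_i(m) + ∑_{j=1}^i (1/j) T_{j-1}(D a) T_{i-j}(m)`. -/
def IsExtConn [Algebra ℚ A] (D : A → F)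
    (mul : ∀ p q, RPow A F p →ₗ[A] RPow A F q →ₗ[A] ∀ k, RPow A F k)
    (T : ∀ i, F →+ RPow A F i) : Prop :=
  (∀ m : F, T 0 m = mkS A F (fun i : Fin 0 => i.elim0) ⊗ₜ[A] m) ∧
  ∀ (i : ℕ), 1 ≤ i → ∀ (a : A) (m : F),
    Pi.single i (T i (a • m))
      = Pi.single i (a • T i m)
        + ∑ j ∈ Finset.Icc 1 i,
            algebraMap ℚ A (1 / (j : ℚ)) •
              mul (j - 1) (i - j) (T (j - 1) (D a)) (T (i - j) m)

/-- `T = (T₀, …, T_N)` is an extended `D`-connection up to order `N`. -/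
def IsExtConnTo [Algebra ℚ A] (D : A → F)
    (mul : ∀ p q, RPow A F p →ₗ[A] RPow A F q →ₗ[A] ∀ k, RPow A F k)
    (N : ℕ) (T : ∀ i, F →+ RPow A F i) : Prop :=
  (∀ m : F, T 0 m = mkS A F (fun i : Fin 0 => i.elim0) ⊗ₜ[A] m) ∧
  ∀ (i : ℕ), 1 ≤ i → i ≤ N → ∀ (a : A) (m : F),
    Pi.single i (T i (a • m))
      = Pi.single i (a • T i m)
        + ∑ j ∈ Finset.Icc 1 i,
            algebraMap ℚ A (1 / (j : ℚ)) •
              mul (j - 1) (i - j) (T (j - 1) (D a)) (T (i - j) m)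

/-- The wedge map `F ⊗_A F →  Λ(F)`, `u ⊗ v ↦ u ∧ v`; an element of `F ⊗ F` maps to
zero in `Λ²(F)` iff its image under this map is zero. -/
def wedgeMap : F ⊗[A] F →ₗ[A] ExteriorAlgebra A F :=
  TensorProduct.lift
    ((LinearMap.mul A (ExteriorAlgebra A F)).compl₁₂ (ExteriorAlgebra.ι A) (ExteriorAlgebra.ι A))


/-- The word of letters of the product `λ_{i₁}(m₁) ⋯ λ_{i_{p+1}}(m_{p+1})` in `R(F)`,
minus its final letter. -/
def bigWord {p : ℕ} {d : Fin (p + 1) → ℕ} (m : ∀ j, Fin (d j) → F)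
    (v : Fin (p + 1) → F) : List F :=
  ((List.ofFn fun j : Fin (p + 1) => List.ofFn (m j) ++ [v j]).flatten).dropLast

/-- The full word of letters of a product of elements of `R₊(F)`, fully symmetrized. -/
def fullWord {p : ℕ} {d : Fin p → ℕ} (m : ∀ j, Fin (d j) → F)
    (v : Fin p → F) : List F :=
  (List.ofFn fun j : Fin p => List.ofFn (m j) ++ [v j]).flatten

/-- `P` is the family of `(p+1)`-fold products `R^{d₁+1} × ⋯ × R^{d_{p+1}+1} → R(F)`:
`(s₁⊗v₁, …) ↦ (s₁v₁s₂v₂⋯s_{p+1}) ⊗ v_{p+1}`. -/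
def IsMultiProdR
    (P : ∀ (p : ℕ) (d : Fin (p + 1) → ℕ),
      MultilinearMap A (fun j : Fin (p + 1) => RPow A F (d j)) (∀ k, RPow A F k)) :
    Prop :=
  ∀ (p : ℕ) (d : Fin (p + 1) → ℕ) (m : ∀ j, Fin (d j) → F) (v : Fin (p + 1) → F),
    P p d (fun j => mkS A F (m j) ⊗ₜ[A] v j)
      = Pi.single (bigWord F m v).length
          (mkSL A F (bigWord F m v) ⊗ₜ[A] v (Fin.last p))

/-- `P` is the family of `p`-fold products with values in the symmetric algebra:
the image in `S(F)` of a product of elements of `R₊(F)`. -/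
def IsMultiProdS
    (P : ∀ (p : ℕ) (d : Fin p → ℕ),
      MultilinearMap A (fun j : Fin p => RPow A F (d j)) (∀ k, SymPow A F k)) : Prop :=
  ∀ (p : ℕ) (d : Fin p → ℕ) (m : ∀ j, Fin (d j) → F) (v : Fin p → F),
    P p d (fun j => mkS A F (m j) ⊗ₜ[A] v j)
      = Pi.single (fullWord F m v).length (mkSL A F (fullWord F m v))

/-- `s` is the operator `s_q(λ) : R^{p+1}(F) → R^{p+q+1}(F)`,
`s_q(λ) = ∑_{i₁+⋯+i_{p+1}=q} (i_{p+1}+1)(λ_{i₁} ⋯ λ_{i_{p+1}})`. -/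
def IsSq
    (P : ∀ (p : ℕ) (d : Fin (p + 1) → ℕ),
      MultilinearMap A (fun j : Fin (p + 1) => RPow A F (d j)) (∀ k, RPow A F k))
    (lam : ∀ i, F →ₗ[A] RPow A F i) (p q : ℕ)
    (s : RPow A F p →ₗ[A] ∀ k, RPow A F k) : Prop :=
  ∀ m : Fin (p + 1) → F,
    s (mkR A F m)
      = ∑ d ∈ Finset.Nat.antidiagonalTuple (p + 1) q,
          (d (Fin.last p) + 1) • P p d (fun j => lam (d j) (m j))

/-- `s` is the operator `s̃_q(λ) : S^p(F) → S^{p+q}(F)`,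
`s̃_q(λ) = ∑_{i₁+⋯+i_p=q} (λ_{i₁} ⋯ λ_{i_p})`. -/
def IsSqTilde
    (P : ∀ (p : ℕ) (d : Fin p → ℕ),
      MultilinearMap A (fun j : Fin p => RPow A F (d j)) (∀ k, SymPow A F k))
    (lam : ∀ i, F →ₗ[A] RPow A F i) (p q : ℕ)
    (s : SymPow A F p →ₗ[A] ∀ k, SymPow A F k) : Prop :=
  ∀ m : Fin p → F,
    s (mkS A F m)
      = ∑ d ∈ Finset.Nat.antidiagonalTuple p q,
          P p d (fun j => lam (d j) (m j))

-- aux lemmas part 1: basic symmetric power lemmas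
section Aux
variable (A : Type) [CommRing A]
variable (F : Type) [AddCommGroup F] [Module A F]

theorem mkS_comp_perm {n : ℕ} (m : Fin n → F) (e : Equiv.Perm (Fin n)) :
    mkS A F (m ∘ e) = mkS A F m := by
  rw [mkS, mkS, Submodule.Quotient.eq]
  have : PiTensorProduct.tprod A m - PiTensorProduct.tprod A (m ∘ e) ∈ symRel A F n :=
    Submodule.subset_span ⟨m, e, rfl⟩
  simpa using (symRel A F n).neg_mem this

/-- Extend a permutation of `Fin n` to `Fin (n+1)` fixing `0`. -/
def succPerm {n : ℕ} (e : Equiv.Perm (Fin n)) : Equiv.Perm (Fin (n + 1)) where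
  toFun := Fin.cons 0 (fun i => (e i).succ)
  invFun := Fin.cons 0 (fun i => (e.symm i).succ)
  left_inv := by
    intro j
    refine Fin.cases ?_ (fun i => ?_) j <;> simp
  right_inv := by
    intro j
    refine Fin.cases ?_ (fun i => ?_) j <;> simp

theorem cons_comp_succPerm {n : ℕ} (a : F) (m : Fin n → F) (e : Equiv.Perm (Fin n)) :
    Fin.cons a (m ∘ e) = (Fin.cons a m : Fin (n+1) → F) ∘ (succPerm e) := by
  funext j
  refine Fin.cases ?_ (fun i => ?_) j <;> simp [succPerm]

/-- prepend `a` to tensor words. -/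
def consT (a : F) (n : ℕ) : TPow A F n →ₗ[A] TPow A F (n + 1) :=
  PiTensorProduct.lift
    ((PiTensorProduct.tprod A (s := fun _ : Fin (n+1) => F)).curryLeft a)

theorem consT_tprod (a : F) {n : ℕ} (m : Fin n → F) :
    consT A F a n (PiTensorProduct.tprod A m) = PiTensorProduct.tprod A (Fin.cons a m) := by
  rw [consT, PiTensorProduct.lift.tprod]
  rfl

theorem consT_rel (a : F) (n : ℕ) :
    symRel A F n ≤ (symRel A F (n+1)).comap (consT A F a n) := by
  rw [symRel, Submodule.span_le]
  rintro x ⟨m, e, rfl⟩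
  simp only [SetLike.mem_coe, Submodule.mem_comap, map_sub, consT_tprod A F]
  rw [cons_comp_succPerm]
  exact Submodule.subset_span ⟨Fin.cons a m, succPerm e, rfl⟩

/-- prepend `a` to symmetric words. -/
def consS (a : F) (n : ℕ) : SymPow A F n →ₗ[A] SymPow A F (n + 1) :=
  Submodule.mapQ _ _ (consT A F a n) (consT_rel A F a n)

theorem consS_mkS (a : F) {n : ℕ} (m : Fin n → F) :
    consS A F a n (mkS A F m) = mkS A F (Fin.cons a m) := by
  simp [consS, mkS, Submodule.mapQ_apply, consT_tprod]

end Aux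
section Aux2
variable (A : Type) [CommRing A]
variable (F : Type) [AddCommGroup F] [Module A F]

/-- `mkSL` with a cast of the length. -/
def mkSC {k : ℕ} (l : List F) (h : l.length = k) : SymPow A F k :=
  mkS A F (fun j => l.get (Fin.cast h.symm j))

theorem mkSC_rfl (l : List F) : mkSC A F l rfl = mkSL A F l := rfl

theorem mkSC_cons {k : ℕ} (a : F) (t : List F) (h : (a :: t).length = k + 1)
    (h' : t.length = k) :
    mkSC A F (a :: t) h = consS A F a k (mkSC A F t h') := by
  rw [mkSC, mkSC, consS_mkS]
  congr 1
  funext j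
  refine Fin.cases ?_ (fun i => ?_) j
  · simp [List.get]
  · simp [List.get_eq_getElem, Fin.cons_succ]

theorem mkSC_perm {l₁ l₂ : List F} (hp : l₁.Perm l₂) :
    ∀ {k : ℕ} (h₁ : l₁.length = k) (h₂ : l₂.length = k),
    mkSC A F l₁ h₁ = mkSC A F l₂ h₂ := by
  induction hp with
  | nil => intro k h₁ h₂; rfl
  | @cons a t₁ t₂ hpt IH =>
    intro k h₁ h₂
    match k, h₁ with
    | (k'+1), h₁ =>
      rw [mkSC_cons A F a t₁ h₁ (by simpa using h₁),
        mkSC_cons A F a t₂ h₂ (by simpa using h₂)]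
      rw [IH (by simpa using h₁) (by simpa using h₂)]
  | @swap x y t =>
    intro k h₁ h₂
    match k, h₁ with
    | (k'+2), h₁ =>
      rw [mkSC, mkSC]
      have : (fun j => (y :: x :: t).get (Fin.cast h₁.symm j))
          = (fun j => (x :: y :: t).get (Fin.cast h₂.symm j)) ∘ (Equiv.swap (0 : Fin (k'+2)) 1) := by
        funext j
        rcases j with ⟨_ | _ | j, hj⟩
        · simp [Equiv.swap_apply_left]
        · simp [Equiv.swap_apply_right]
        · have h0 : (⟨j+2, hj⟩ : Fin (k'+2)) ≠ 0 := by simp [Fin.ext_iff]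
          have h1 : (⟨j+2, hj⟩ : Fin (k'+2)) ≠ 1 := by simp [Fin.ext_iff]
          rw [Function.comp_apply, Equiv.swap_apply_of_ne_of_ne h0 h1]
          rfl
      rw [this, mkS_comp_perm]
  | @trans la lb lc hp₁₂ hp₂₃ IH₁ IH₂ =>
    intro k h₁ h₂
    have h : lb.length = k := hp₁₂.length_eq.symm.trans h₁
    exact (IH₁ h₁ h).trans (IH₂ h h₂)

end Aux2
section Aux3
variable (A : Type) [CommRing A]
variable (F : Type) [AddCommGroup F] [Module A F]

theorem mkSC_heq {k : ℕ} (l : List F) (h : l.length = k) :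
    HEq (mkSC A F l h) (mkSL A F l) := by
  subst h; rfl

theorem piSingle_heq {M : ℕ → Type} [∀ i, AddCommGroup (M i)] {i j : ℕ} (h : i = j)
    {x : M i} {y : M j} (hxy : HEq x y) :
    (Pi.single i x : ∀ k, M k) = Pi.single j y := by
  subst h; rw [eq_of_heq hxy]

theorem mkSL_heq_of_perm {l₁ l₂ : List F} (hp : l₁.Perm l₂) :
    HEq (mkSL A F l₁) (mkSL A F l₂) := by
  have h := hp.length_eq
  refine HEq.trans (HEq.symm (mkSC_heq A F l₁ h)) ?_
  rw [mkSC_perm A F hp h rfl, mkSC_rfl]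

theorem single_mkSL_perm {l₁ l₂ : List F} (hp : l₁.Perm l₂) :
    (Pi.single l₁.length (mkSL A F l₁) : ∀ k, SymPow A F k)
      = Pi.single l₂.length (mkSL A F l₂) :=
  piSingle_heq hp.length_eq (mkSL_heq_of_perm A F hp)

/-- Extensionality for multilinear maps on spanning sets. -/
theorem ml_ext : ∀ {p : ℕ} {M : Fin p → Type} [∀ j, AddCommGroup (M j)]
    [∀ j, Module A (M j)] {N : Type} [AddCommGroup N] [Module A N]
    (S : ∀ j, Set (M j)) (_ : ∀ j, Submodule.span A (S j) = ⊤)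
    (f g : MultilinearMap A M N)
    (_ : ∀ x : ∀ j, M j, (∀ j, x j ∈ S j) → f x = g x), f = g := by
  intro p
  induction p with
  | zero =>
    intro M _ _ N _ _ S hS f g h
    ext x
    exact h x (fun j => j.elim0)
  | succ n IH =>
    intro M _ _ N _ _ S hS f g h
    have hc : f.curryLeft = g.curryLeft := by
      apply LinearMap.ext_on (hS 0)
      intro x₀ hx₀
      refine IH (fun j => S j.succ) (fun j => hS j.succ) _ _ ?_
      intro y hy
      simp only [MultilinearMap.curryLeft_apply]
      refine h (Fin.cons x₀ y) ?_
      intro j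
      refine Fin.cases ?_ (fun i => ?_) j
      · simpa using hx₀
      · simpa using hy i
    ext x
    have := congrArg (fun φ => φ (x 0) (Fin.tail x)) hc
    simpa [Fin.cons_self_tail] using this

/-- `RPow` is spanned by pure word tensors. -/
theorem span_pure (n : ℕ) :
    Submodule.span A {y : RPow A F n | ∃ (w : Fin n → F) (v : F), y = mkS A F w ⊗ₜ[A] v} = ⊤ := by
  rw [eq_top_iff]
  rintro x -
  have key : ∀ (v : F) (t : TPow A F n),
      (Submodule.Quotient.mk t : SymPow A F n) ⊗ₜ[A] v ∈
        Submodule.span A {y : RPow A F n | ∃ (w : Fin n → F) (v : F), y = mkS A F w ⊗ₜ[A] v} := by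
    intro v t
    have ht : t ∈ Submodule.span A
        (Set.range (PiTensorProduct.tprod A (s := fun _ : Fin n => F))) := by
      rw [PiTensorProduct.span_tprod_eq_top]; trivial
    induction ht using Submodule.span_induction with
    | mem z hz =>
      obtain ⟨m, rfl⟩ := hz
      exact Submodule.subset_span ⟨m, v, rfl⟩
    | zero =>
      rw [Submodule.Quotient.mk_zero, TensorProduct.zero_tmul]
      exact Submodule.zero_mem _
    | add a b _ _ ha hb =>
      rw [Submodule.Quotient.mk_add, TensorProduct.add_tmul]
      exact Submodule.add_mem _ ha hb
    | smul a z _ hz =>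
      rw [Submodule.Quotient.mk_smul, ← TensorProduct.smul_tmul']
      exact Submodule.smul_mem _ a hz
  induction x using TensorProduct.induction_on with
  | zero => exact Submodule.zero_mem _
  | tmul s v =>
    obtain ⟨t, rfl⟩ := Submodule.Quotient.mk_surjective _ s
    exact key v t
  | add a b ha hb => exact Submodule.add_mem _ ha hb

end Aux3
section Aux4
variable (A : Type) [CommRing A]
variable (F : Type) [AddCommGroup F] [Module A F]

theorem bigWord_eq_dropLast {p : ℕ} {d : Fin (p + 1) → ℕ} (m : ∀ j, Fin (d j) → F)
    (v : Fin (p + 1) → F) : bigWord F m v = (fullWord F m v).dropLast := rfl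

theorem fullWord_eq_append {p : ℕ} {d : Fin (p + 1) → ℕ} (m : ∀ j, Fin (d j) → F)
    (v : Fin (p + 1) → F) :
    fullWord F m v = bigWord F m v ++ [v (Fin.last p)] := by
  rw [bigWord_eq_dropLast]
  have : fullWord F m v =
      ((List.ofFn fun j : Fin p => List.ofFn (m j.castSucc) ++ [v j.castSucc]).flatten
        ++ List.ofFn (m (Fin.last p))) ++ [v (Fin.last p)] := by
    rw [fullWord, List.ofFn_succ']
    rw [List.concat_eq_append, List.flatten_append]
    simp [List.append_assoc]
  rw [this, List.dropLast_concat]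

theorem fullWord_perm {p : ℕ} {d : Fin p → ℕ} (w : ∀ j, Fin (d j) → F)
    (v : Fin p → F) (e : Equiv.Perm (Fin p)) :
    (fullWord F (fun j => w (e j)) (fun j => v (e j)) : List F).Perm (fullWord F w v) := by
  rw [fullWord, fullWord]
  have h1 : (List.ofFn fun j : Fin p => List.ofFn (w (e j)) ++ [v (e j)]).Perm
      (List.ofFn fun j : Fin p => List.ofFn (w j) ++ [v j]) :=
    Equiv.Perm.ofFn_comp_perm e (fun j => List.ofFn (w j) ++ [v j])
  have h2 := h1.flatMap_right id
  rwa [List.flatMap_id, List.flatMap_id] at h2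

theorem snoc_get (B : List F) (vl : F) (h : (B ++ [vl]).length = B.length + 1) :
    (Fin.snoc (B.get) vl : Fin (B.length + 1) → F)
      = fun j => (B ++ [vl]).get (Fin.cast h.symm j) := by
  funext j
  refine Fin.lastCases ?_ (fun i => ?_) j
  · simp [Fin.snoc_last, List.get_eq_getElem, List.getElem_append_right]
  · simp [Fin.snoc_castSucc, List.get_eq_getElem, List.getElem_append_left]

end Aux4
section Aux5
variable (A : Type) [CommRing A]
variable (F : Type) [AddCommGroup F] [Module A F]

/-- The symmetry of the multi-product with values in the symmetric algebra. -/
theorem PS_reindex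
    (PS : ∀ (p : ℕ) (d : Fin p → ℕ),
      MultilinearMap A (fun j : Fin p => RPow A F (d j)) (∀ k, SymPow A F k))
    (hPS : IsMultiProdS A F PS) (p : ℕ) (d : Fin p → ℕ) (e : Equiv.Perm (Fin p))
    (y : ∀ j, RPow A F (d j)) :
    PS p d y = PS p (d ∘ e) (fun j => y (e j)) := by
  have key : PS p d
      = (MultilinearMap.domDomCongrLinearEquiv' A A (fun j => RPow A F (d j))
          (∀ k, SymPow A F k) e.symm).symm (PS p (d ∘ e)) := by
    refine ml_ext A (fun j => {y : RPow A F (d j) | ∃ (w : Fin (d j) → F) (v : F),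
        y = mkS A F w ⊗ₜ[A] v}) (fun j => span_pure A F (d j)) _ _ ?_
    intro x hx
    choose w v hwv using hx
    have hx' : x = fun j => mkS A F (w j) ⊗ₜ[A] v j := funext hwv
    subst hx'
    have h1 := hPS p d w v
    have h2 := hPS p (d ∘ e) (fun j => w (e j)) (fun j => v (e j))
    rw [h1]
    have : ((MultilinearMap.domDomCongrLinearEquiv' A A (fun j => RPow A F (d j))
          (∀ k, SymPow A F k) e.symm).symm (PS p (d ∘ e)))
          (fun j => mkS A F (w j) ⊗ₜ[A] v j)
        = PS p (d ∘ e) (fun j => mkS A F (w (e j)) ⊗ₜ[A] v (e j)) := rfl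
    rw [this, h2]
    exact (single_mkSL_perm A F (fullWord_perm F w v e)).symm
  rw [key]
  rfl

/-- rotation as a permutation. -/
def rotPerm (n i : ℕ) (hi : i ≤ n) : Equiv.Perm (Fin (n + 1)) where
  toFun j := if _h : j.val < i then ⟨n - j.val, by omega⟩
    else ⟨j.val - i, by have := j.isLt; omega⟩
  invFun t := if _h : n - i < t.val then ⟨n - t.val, by omega⟩
    else ⟨t.val + i, by have := t.isLt; omega⟩
  left_inv := by
    intro j
    have hj := j.isLt
    dsimp only
    rcases Nat.lt_or_ge j.val i with h | h
    · rw [dif_pos h, dif_pos (show n - i < n - j.val by omega)]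
      ext; dsimp only; omega
    · rw [dif_neg (show ¬ j.val < i by omega), dif_neg (show ¬ n - i < j.val - i by omega)]
      ext; dsimp only; omega
  right_inv := by
    intro t
    have ht := t.isLt
    dsimp only
    rcases Nat.lt_or_ge (n - i) t.val with h | h
    · rw [dif_pos h, dif_pos (show n - t.val < i by omega)]
      ext; dsimp only; omega
    · rw [dif_neg (show ¬ n - i < t.val by omega), dif_neg (show ¬ t.val + i < i by omega)]
      ext; dsimp only; omega

theorem rot_eq_comp {n : ℕ} (m : Fin (n + 1) → F) (i : ℕ) (hi : i ≤ n) :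
    rot F m i = m ∘ rotPerm n i hi := by
  funext j
  rw [rot]
  rcases Nat.lt_or_ge j.val i with h | h
  · rw [if_pos h]
    show _ = m (rotPerm n i hi j)
    rw [show (rotPerm n i hi j) = ⟨n - j.val, by omega⟩ from dif_pos h]
  · rw [if_neg (by omega)]
    show _ = m (rotPerm n i hi j)
    rw [show (rotPerm n i hi j) = ⟨j.val - i, by have := j.isLt; omega⟩ from dif_neg (by omega)]

theorem rotPerm_last (n i : ℕ) (hi : i ≤ n) :
    rotPerm n i hi (Fin.last n) = ⟨n - i, by omega⟩ := by
  show (if _h : (Fin.last n).val < i then _ else _) = _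
  rw [dif_neg (show ¬ (Fin.last n).val < i by simp [Fin.last]; omega)]
  ext; simp only [Fin.val_last]

theorem rot_zero {n : ℕ} (m : Fin (n + 1) → F) : rot F m 0 = m := by
  funext j
  rw [rot, if_neg (by omega)]
  exact congrArg m (Fin.ext (Nat.sub_zero _))

theorem pi_mkR (π : ∀ k, RPow A F k →ₗ[A] SymPow A F (k + 1)) (hπ : IsPi A F π)
    {n : ℕ} (m : Fin (n + 1) → F) : π n (mkR A F m) = mkS A F m := by
  rw [mkR, hπ]
  congr 1
  funext j
  refine Fin.lastCases ?_ (fun i => ?_) j <;> simp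

/-- `π` intertwines the products `P` and `PS`. -/
theorem piP_eq_PS
    (P : ∀ (p : ℕ) (d : Fin (p + 1) → ℕ),
      MultilinearMap A (fun j : Fin (p + 1) => RPow A F (d j)) (∀ k, RPow A F k))
    (hP : IsMultiProdR A F P)
    (PS : ∀ (p : ℕ) (d : Fin p → ℕ),
      MultilinearMap A (fun j : Fin p => RPow A F (d j)) (∀ k, SymPow A F k))
    (hPS : IsMultiProdS A F PS)
    (π : ∀ k, RPow A F k →ₗ[A] SymPow A F (k + 1)) (hπ : IsPi A F π)
    (n : ℕ) (d : Fin (n + 1) → ℕ) (k : ℕ) (x : ∀ j, RPow A F (d j)) :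
    π k (P n d x k) = PS (n + 1) d x (k + 1) := by
  have key : ((π k).comp (LinearMap.proj k)).compMultilinearMap (P n d)
      = (LinearMap.proj (k + 1)).compMultilinearMap (PS (n + 1) d) := by
    refine ml_ext A (fun j => {y : RPow A F (d j) | ∃ (w : Fin (d j) → F) (v : F),
        y = mkS A F w ⊗ₜ[A] v}) (fun j => span_pure A F (d j)) _ _ ?_
    intro x hx
    choose w v hwv using hx
    have hx' : x = fun j => mkS A F (w j) ⊗ₜ[A] v j := funext hwv
    subst hx'
    simp only [LinearMap.compMultilinearMap_apply, LinearMap.comp_apply, LinearMap.proj_apply]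
    rw [hP n d w v, hPS (n + 1) d w v]
    have hF : fullWord F w v = bigWord F w v ++ [v (Fin.last n)] := fullWord_eq_append F w v
    by_cases hk : k = (bigWord F w v).length
    · subst hk
      rw [Pi.single_eq_same,
        show mkSL A F (bigWord F w v) = mkS A F (bigWord F w v).get from rfl, hπ]
      have hlen : (fullWord F w v).length = (bigWord F w v).length + 1 := by
        rw [hF, List.length_append]; rfl
      have hsingle : (Pi.single (fullWord F w v).length (mkSL A F (fullWord F w v))
            : ∀ k, SymPow A F k)
          = Pi.single ((bigWord F w v).length + 1)
              (mkSC A F (fullWord F w v) hlen) :=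
        piSingle_heq hlen (mkSC_heq A F _ hlen).symm
      rw [hsingle, Pi.single_eq_same, mkSC]
      have hsn := snoc_get F (bigWord F w v) (v (Fin.last n))
        (by rw [List.length_append]; rfl)
      congr 1
      funext j
      rw [congrFun hsn j]
      simp only [List.get_eq_getElem, Fin.coe_cast]
      exact List.getElem_of_eq hF.symm _
    · rw [Pi.single_eq_of_ne hk, map_zero]
      have : k + 1 ≠ (fullWord F w v).length := by
        rw [hF, List.length_append]
        simpa using hk
      rw [Pi.single_eq_of_ne this]
  have := congrArg (fun φ => φ x) key
  simpa using this

end Aux5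
/-- For every `ω ∈ K^p(F)` (here `p := p'+1`), the images in
`S^{p+q}(F)` satisfy `s_q(λ)(ω) = ((p+q)/p) · s̃_q(λ)(ω)`. -/
theorem sq_eq_sqTilde_on_K [Algebra ℚ A]
    (lam : ∀ i, F →ₗ[A] RPow A F i)
    (P : ∀ (p : ℕ) (d : Fin (p + 1) → ℕ),
      MultilinearMap A (fun j : Fin (p + 1) => RPow A F (d j)) (∀ k, RPow A F k))
    (hP : IsMultiProdR A F P)
    (PS : ∀ (p : ℕ) (d : Fin p → ℕ),
      MultilinearMap A (fun j : Fin p => RPow A F (d j)) (∀ k, SymPow A F k))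
    (hPS : IsMultiProdS A F PS)
    (π : ∀ k, RPow A F k →ₗ[A] SymPow A F (k + 1)) (hπ : IsPi A F π)
    (p' q : ℕ)
    (s : RPow A F p' →ₗ[A] ∀ k, RPow A F k) (hs : IsSq A F P lam p' q s)
    (st : SymPow A F (p' + 1) →ₗ[A] ∀ k, SymPow A F k)
    (hst : IsSqTilde A F PS lam (p' + 1) q st) :
    ∀ ω ∈ KSub A F p', ∀ k : ℕ,
      π k (s ω k)
        = algebraMap ℚ A ((p' + 1 + q : ℚ) / (p' + 1 : ℚ)) • st (π p' ω) (k + 1) := by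
  intro ω hω
  induction hω using Submodule.span_induction with
  | mem x hx =>
    obtain ⟨m, rfl⟩ := hx
    intro k
    -- rewrite the generator as a single sum over `range (p'+1)`
    have hins : Finset.range (p' + 1) = insert 0 (Finset.Icc 1 p') := by
      ext x; simp [Finset.mem_range, Finset.mem_Icc]; omega
    have hgen : mkR A F m + ∑ i ∈ Finset.Icc 1 p', mkR A F (rot F m i)
        = ∑ i ∈ Finset.range (p' + 1), mkR A F (rot F m i) := by
      rw [hins, Finset.sum_insert (by simp), rot_zero]
    rw [hgen]
    set c : A := algebraMap ℚ A ((p' + 1 + q : ℚ) / (p' + 1 : ℚ)) with hc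
    -- LHS computation
    have hLHS : π k (s (∑ i ∈ Finset.range (p' + 1), mkR A F (rot F m i)) k)
        = ∑ i ∈ Finset.range (p' + 1), ∑ d ∈ Finset.Nat.antidiagonalTuple (p' + 1) q,
            (d (Fin.last p') + 1) •
              PS (p' + 1) d (fun j => lam (d j) (rot F m i j)) (k + 1) := by
      rw [map_sum, Finset.sum_apply, map_sum]
      refine Finset.sum_congr rfl ?_
      intro i _
      rw [hs (rot F m i), Finset.sum_apply, map_sum]
      refine Finset.sum_congr rfl ?_
      intro d _
      rw [Pi.smul_apply, map_nsmul, piP_eq_PS A F P hP PS hPS π hπ p' d k]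
    rw [hLHS]
    -- rewrite each inner sum using the rotation symmetry
    have hinner : ∀ i ∈ Finset.range (p' + 1),
        (∑ d ∈ Finset.Nat.antidiagonalTuple (p' + 1) q,
            (d (Fin.last p') + 1) •
              PS (p' + 1) d (fun j => lam (d j) (rot F m i j)) (k + 1))
        = ∑ d ∈ Finset.Nat.antidiagonalTuple (p' + 1) q,
            (d ⟨p' - i, by omega⟩ + 1) •
              PS (p' + 1) d (fun j => lam (d j) (m j)) (k + 1) := by
      intro i hi
      have hi' : i ≤ p' := by simpa [Nat.lt_succ_iff] using hi
      rw [rot_eq_comp F m i hi']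
      refine (Finset.sum_nbij' (fun d => d ∘ (rotPerm p' i hi'))
        (fun d => d ∘ (rotPerm p' i hi').symm) ?_ ?_ ?_ ?_ ?_).symm
      · intro d hd
        rw [Finset.Nat.mem_antidiagonalTuple] at hd ⊢
        rw [← hd]
        exact Equiv.sum_comp (rotPerm p' i hi') d
      · intro d hd
        rw [Finset.Nat.mem_antidiagonalTuple] at hd ⊢
        rw [← hd]
        exact Equiv.sum_comp (rotPerm p' i hi').symm d
      · intro d _; funext j; simp
      · intro d _; funext j; simp
      · intro d _
        have hsym := PS_reindex A F PS hPS (p' + 1) d (rotPerm p' i hi')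
          (fun j => lam (d j) (m j))
        have hl : rotPerm p' i hi' (Fin.last p') = ⟨p' - i, by omega⟩ :=
          rotPerm_last p' i hi'
        exact congrArg₂
          (fun (t : ℕ) (z : ∀ k, SymPow A F k) => (t + 1) • z (k + 1))
          (congrArg d hl.symm) hsym
    rw [Finset.sum_congr rfl hinner, Finset.sum_comm]
    -- compute the coefficient sums
    have hcoef : ∀ d ∈ Finset.Nat.antidiagonalTuple (p' + 1) q,
        (∑ i ∈ Finset.range (p' + 1), (d ⟨p' - i, by omega⟩ + 1)) = q + (p' + 1) := by
      intro d hd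
      rw [Finset.Nat.mem_antidiagonalTuple] at hd
      have h1 : (∑ i ∈ Finset.range (p' + 1), (d ⟨p' - i, by omega⟩ + 1))
          = ∑ t ∈ Finset.range (p' + 1), (d ⟨min t p', by omega⟩ + 1) := by
        refine Finset.sum_nbij' (fun t => p' - t) (fun t => p' - t) ?_ ?_ ?_ ?_ ?_
        · intro a ha; simp at ha ⊢
        · intro a ha; simp at ha ⊢
        · intro a ha; simp at ha ⊢; omega
        · intro a ha; simp at ha ⊢; omega
        · intro a ha
          simp only [Finset.mem_range] at ha
          exact congrArg (fun z => d z + 1) (Fin.ext (by dsimp only; omega))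
      rw [h1, ← Fin.sum_univ_eq_sum_range (fun t => d ⟨min t p', by omega⟩ + 1) (p' + 1)]
      have h2 : ∀ j : Fin (p' + 1), (d ⟨min j.val p', by omega⟩ + 1) = d j + 1 := by
        intro j
        congr 2
        ext
        simp
        omega
      rw [Finset.sum_congr rfl (fun j _ => h2 j), Finset.sum_add_distrib, hd,
        Finset.sum_const, Finset.card_univ, Fintype.card_fin, smul_eq_mul, mul_one]
    -- RHS computation
    have hπω : π p' (∑ i ∈ Finset.range (p' + 1), mkR A F (rot F m i))
        = (p' + 1) • mkS A F m := by
      rw [map_sum]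
      have h3 : ∀ i ∈ Finset.range (p' + 1), π p' (mkR A F (rot F m i)) = mkS A F m := by
        intro i hi
        have hi' : i ≤ p' := by simpa [Nat.lt_succ_iff] using hi
        rw [pi_mkR A F π hπ, rot_eq_comp F m i hi', mkS_comp_perm]
      rw [Finset.sum_congr rfl h3, Finset.sum_const, Finset.card_range]
    rw [hπω, map_nsmul, Pi.smul_apply, hst m, Finset.sum_apply]
    -- final scalar identity
    have hne : ((p' : ℚ) + 1) ≠ 0 := by positivity
    have hscalar : ((q + (p' + 1) : ℕ) : A) = c * ((p' + 1 : ℕ) : A) := by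
      rw [hc, ← map_natCast (algebraMap ℚ A) (p' + 1),
        ← map_natCast (algebraMap ℚ A) (q + (p' + 1)), ← map_mul]
      congr 1
      field_simp
      push_cast; ring
    calc ∑ d ∈ Finset.Nat.antidiagonalTuple (p' + 1) q,
          ∑ i ∈ Finset.range (p' + 1),
            (d ⟨p' - i, by omega⟩ + 1) •
              PS (p' + 1) d (fun j => lam (d j) (m j)) (k + 1)
        = ∑ d ∈ Finset.Nat.antidiagonalTuple (p' + 1) q,
            (q + (p' + 1)) • PS (p' + 1) d (fun j => lam (d j) (m j)) (k + 1) := by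
          refine Finset.sum_congr rfl ?_
          intro d hd
          rw [← Finset.sum_smul, hcoef d hd]
      _ = ∑ d ∈ Finset.Nat.antidiagonalTuple (p' + 1) q,
            ((q + (p' + 1) : ℕ) : A) • PS (p' + 1) d (fun j => lam (d j) (m j)) (k + 1) :=
          Finset.sum_congr rfl (fun d _ => (Nat.cast_smul_eq_nsmul A _ _).symm)
      _ = ((q + (p' + 1) : ℕ) : A) • ∑ d ∈ Finset.Nat.antidiagonalTuple (p' + 1) q,
            PS (p' + 1) d (fun j => lam (d j) (m j)) (k + 1) := (Finset.smul_sum).symm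
      _ = c • ((p' + 1) • ∑ d ∈ Finset.Nat.antidiagonalTuple (p' + 1) q,
            PS (p' + 1) d (fun j => lam (d j) (m j)) (k + 1)) := by
          rw [hscalar, mul_smul, Nat.cast_smul_eq_nsmul]
  | zero =>
    intro k
    simp
  | add x y hx hy ihx ihy =>
    intro k
    simp only [map_add, Pi.add_apply, smul_add]
    rw [ihx k, ihy k]
  | smul a x hx ihx =>
    intro k
    simp only [map_smul, Pi.smul_apply]
    rw [ihx k, smul_comm]

end
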